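/- arXiv:2305.07449 — 2 statements merged into one kernel-verified Lean document; each statement's English description precedes it below -/
import Mathlib

section
/- Let P be a polygon whose boundary ∂P is covered by S(P) lines, and let k < S(P). If p and q are bivariate polynomials of degree at most k with p = q on ∂P, then p = q on all of ℝ². Consequently the serendipity projector condition ∫_{∂P}(v − Π v) q_k ds = 0 for all q_k ∈ P_k uniquely determines Π v ∈ P_k. -/
set_option maxHeartbeats 1000000
open Polynomial

noncomputable def lineRestrict (r : MvPolynomial (Fin 2) ℝ) (z w : ℝ × ℝ) : Polynomial ℝ :=
  MvPolynomial.eval₂ (Polynomial.C : ℝ →+* Polynomial ℝ)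
    ![Polynomial.C z.1 + Polynomial.C w.1 * Polynomial.X,
      Polynomial.C z.2 + Polynomial.C w.2 * Polynomial.X] r

lemma lineRestrict_eval (r : MvPolynomial (Fin 2) ℝ) (z w : ℝ × ℝ) (t : ℝ) :
    (lineRestrict r z w).eval t = MvPolynomial.eval ![z.1 + w.1 * t, z.2 + w.2 * t] r := by
  rw [lineRestrict]
  rw [show (Polynomial.eval t (MvPolynomial.eval₂ C _ r)) =
    (Polynomial.evalRingHom t) (MvPolynomial.eval₂ C _ r) from rfl,
    MvPolynomial.eval₂_comp_left]
  have h1 : (Polynomial.evalRingHom t).comp (C : ℝ →+* Polynomial ℝ) = RingHom.id ℝ := by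
    ext x; simp
  rw [h1]
  rw [MvPolynomial.eval, MvPolynomial.eval₂Hom]
  congr 1
  funext i
  fin_cases i <;> simp

lemma lineRestrict_natDegree_le (r : MvPolynomial (Fin 2) ℝ) (z w : ℝ × ℝ) :
    (lineRestrict r z w).natDegree ≤ r.totalDegree := by
  rw [lineRestrict, MvPolynomial.eval₂_eq]
  apply Polynomial.natDegree_sum_le_of_forall_le
  intro d hd
  refine (Polynomial.natDegree_mul_le).trans ?_
  rw [Polynomial.natDegree_C, zero_add]
  refine (Polynomial.natDegree_prod_le _ _).trans ?_
  calc ∑ i ∈ d.support, (![C z.1 + C w.1 * X, C z.2 + C w.2 * X] i ^ d i).natDegree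
      ≤ ∑ i ∈ d.support, d i * 1 := by
        refine Finset.sum_le_sum (fun i _ => ?_)
        have h1 : (![C z.1 + C w.1 * X, C z.2 + C w.2 * X] i).natDegree ≤ 1 := by
          fin_cases i <;>
          · refine (Polynomial.natDegree_add_le _ _).trans ?_
            simp only [Polynomial.natDegree_C, max_le_iff]
            exact ⟨Nat.zero_le 1, (Polynomial.natDegree_mul_le).trans (by simp)⟩
        exact (Polynomial.natDegree_pow_le).trans (Nat.mul_le_mul_left (d i) h1)
    _ = d.sum (fun _ e => e) := by simp [Finsupp.sum]
    _ ≤ r.totalDegree := MvPolynomial.le_totalDegree hd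

lemma sq_sum_ne (a b : ℝ) (hab : (a, b) ≠ (0, 0)) : a ^ 2 + b ^ 2 ≠ 0 := by
  intro h
  apply hab
  have ha : a = 0 := by nlinarith [sq_nonneg a, sq_nonneg b]
  have hb : b = 0 := by nlinarith [sq_nonneg a, sq_nonneg b]
  simp [ha, hb]

lemma vanish_line (r : MvPolynomial (Fin 2) ℝ) (a b c : ℝ) (hab : (a, b) ≠ (0, 0))
    (T : Set (ℝ × ℝ)) (hT : T.Infinite)
    (hTL : ∀ x ∈ T, a * x.1 + b * x.2 + c = 0)
    (hr : ∀ x ∈ T, MvPolynomial.eval ![x.1, x.2] r = 0) :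
    ∀ x : ℝ × ℝ, a * x.1 + b * x.2 + c = 0 → MvPolynomial.eval ![x.1, x.2] r = 0 := by
  have hd0 : a ^ 2 + b ^ 2 ≠ 0 := sq_sum_ne a b hab
  have hsurj : ∀ x : ℝ × ℝ, a * x.1 + b * x.2 + c = 0 →
      ((-(a * c) / (a ^ 2 + b ^ 2) + b * ((b * x.1 - a * x.2) / (a ^ 2 + b ^ 2)),
        -(b * c) / (a ^ 2 + b ^ 2) + (-a) * ((b * x.1 - a * x.2) / (a ^ 2 + b ^ 2))) : ℝ × ℝ)
        = x := by
    intro x hx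
    have h1 : -(a * c) / (a ^ 2 + b ^ 2) + b * ((b * x.1 - a * x.2) / (a ^ 2 + b ^ 2)) = x.1 := by
      field_simp
      linear_combination (-a) * hx
    have h2 : -(b * c) / (a ^ 2 + b ^ 2) + (-a) * ((b * x.1 - a * x.2) / (a ^ 2 + b ^ 2)) = x.2 := by
      field_simp
      linear_combination (-b) * hx
    exact Prod.ext h1 h2
  have hfeval : ∀ t, (lineRestrict r (-(a * c) / (a ^ 2 + b ^ 2), -(b * c) / (a ^ 2 + b ^ 2))
        (b, -a)).eval t =
      MvPolynomial.eval ![-(a * c) / (a ^ 2 + b ^ 2) + b * t,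
        -(b * c) / (a ^ 2 + b ^ 2) + (-a) * t] r := fun t => lineRestrict_eval r _ _ t
  have hf0 : lineRestrict r (-(a * c) / (a ^ 2 + b ^ 2), -(b * c) / (a ^ 2 + b ^ 2)) (b, -a)
      = 0 := by
    apply Polynomial.eq_zero_of_infinite_isRoot
    have hpre : ((fun t : ℝ => ((-(a * c) / (a ^ 2 + b ^ 2) + b * t,
        -(b * c) / (a ^ 2 + b ^ 2) + (-a) * t) : ℝ × ℝ)) ⁻¹' T).Infinite := by
      apply hT.preimage
      intro x hx
      exact ⟨_, hsurj x (hTL x hx)⟩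
    refine hpre.mono (fun t ht => ?_)
    have h2 := hr _ ht
    rw [Set.mem_setOf_eq, Polynomial.IsRoot.def, hfeval t]
    exact h2
  intro x hx
  have h := hfeval ((b * x.1 - a * x.2) / (a ^ 2 + b ^ 2))
  rw [hf0, Polynomial.eval_zero] at h
  have hx1 := congrArg Prod.fst (hsurj x hx)
  have hx2 := congrArg Prod.snd (hsurj x hx)
  simp only at hx1 hx2
  rw [hx1, hx2] at h
  exact h.symm

lemma lin_finite (α β : ℝ) (h : ¬(α = 0 ∧ β = 0)) : {s : ℝ | α * s + β = 0}.Finite := by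
  by_cases hα : α = 0
  · have hβ : β ≠ 0 := fun hb => h ⟨hα, hb⟩
    have he : {s : ℝ | α * s + β = 0} = ∅ := by ext s; simp [hα, hβ]
    simp [he]
  · apply Set.Finite.subset (Set.finite_singleton (-β / α))
    intro s hs
    simp only [Set.mem_setOf_eq] at hs
    simp only [Set.mem_singleton_iff]
    field_simp
    linarith

lemma vanish_everywhere {r : MvPolynomial (Fin 2) ℝ} {k : ℕ} (hr : r.totalDegree ≤ k)
    (a b c : Fin (k + 1) → ℝ)
    (hab : ∀ i, (a i, b i) ≠ (0, 0))
    (hdist : ∀ i j, i ≠ j →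
      ({x : ℝ × ℝ | a i * x.1 + b i * x.2 + c i = 0} : Set (ℝ × ℝ)) ≠
        {x : ℝ × ℝ | a j * x.1 + b j * x.2 + c j = 0})
    (hvan : ∀ (i) (x : ℝ × ℝ), a i * x.1 + b i * x.2 + c i = 0 →
      MvPolynomial.eval ![x.1, x.2] r = 0)
    (z : ℝ × ℝ) : MvPolynomial.eval ![z.1, z.2] r = 0 := by
  by_cases hz : ∃ i, a i * z.1 + b i * z.2 + c i = 0
  · obtain ⟨i, hi⟩ := hz; exact hvan i z hi
  push_neg at hz
  -- A i = value of line i at z, nonzero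
  have habne : ∀ i, ¬(a i = 0 ∧ b i = 0) := by
    intro i h; exact hab i (by simp [h.1, h.2])
  have hfin1 : ∀ i, {s : ℝ | b i * s + a i = 0}.Finite := by
    intro i
    apply lin_finite
    intro h; exact habne i ⟨h.2, h.1⟩
  have hfin2 : ∀ i j, {s : ℝ | i ≠ j ∧
      (a i * z.1 + b i * z.2 + c i) * (a j + b j * s)
        = (a j * z.1 + b j * z.2 + c j) * (a i + b i * s)}.Finite := by
    intro i j
    by_cases hij : i = j
    · have he : {s : ℝ | i ≠ j ∧
          (a i * z.1 + b i * z.2 + c i) * (a j + b j * s)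
            = (a j * z.1 + b j * z.2 + c j) * (a i + b i * s)} = ∅ := by
        ext s; simp [hij]
      rw [he]; exact Set.finite_empty
    · have hsub : {s : ℝ | i ≠ j ∧
          (a i * z.1 + b i * z.2 + c i) * (a j + b j * s)
            = (a j * z.1 + b j * z.2 + c j) * (a i + b i * s)} ⊆
          {s : ℝ | ((a i * z.1 + b i * z.2 + c i) * b j
              - (a j * z.1 + b j * z.2 + c j) * b i) * s
            + ((a i * z.1 + b i * z.2 + c i) * a j
              - (a j * z.1 + b j * z.2 + c j) * a i) = 0} := by
        intro s hsx
        simp only [Set.mem_setOf_eq] at hsx ⊢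
        linear_combination hsx.2
      refine Set.Finite.subset (lin_finite _ _ ?_) hsub
      rintro ⟨h1, h2⟩
      -- then the two lines are equal as sets, contradiction
      apply hdist i j hij
      have hAine : a i * z.1 + b i * z.2 + c i ≠ 0 := hz i
      have hAjne : a j * z.1 + b j * z.2 + c j ≠ 0 := hz j
      have hc2 : (a i * z.1 + b i * z.2 + c i) * c j
          = (a j * z.1 + b j * z.2 + c j) * c i := by
        linear_combination (-z.1) * h2 + (-z.2) * h1
      have key : ∀ x : ℝ × ℝ, (a i * z.1 + b i * z.2 + c i) * (a j * x.1 + b j * x.2 + c j)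
          = (a j * z.1 + b j * z.2 + c j) * (a i * x.1 + b i * x.2 + c i) := by
        intro x
        linear_combination x.1 * h2 + x.2 * h1 + hc2
      ext x
      simp only [Set.mem_setOf_eq]
      constructor
      · intro hx
        have h3 := key x
        rw [hx, mul_zero] at h3
        exact (mul_eq_zero.mp h3).resolve_left hAine
      · intro hx
        have h3 := key x
        rw [hx, mul_zero] at h3
        exact (mul_eq_zero.mp h3.symm).resolve_left hAjne
  obtain ⟨s, hs⟩ := (Set.Finite.union (Set.finite_iUnion hfin1)
    (Set.finite_iUnion (fun i => Set.finite_iUnion (fun j => hfin2 i j)))).infinite_compl.nonempty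
  simp only [Set.mem_compl_iff, Set.mem_union, Set.mem_iUnion, Set.mem_setOf_eq, not_or,
    not_exists] at hs
  obtain ⟨hs1, hs2⟩ := hs
  have hD : ∀ i, a i + b i * s ≠ 0 := by
    intro i h
    exact hs1 i (by linarith)
  -- the parameters where the transversal line meets each line i
  set t : Fin (k + 1) → ℝ :=
    fun i => -(a i * z.1 + b i * z.2 + c i) / (a i + b i * s) with ht
  have tinj : Function.Injective t := by
    intro i j hij
    by_contra hne
    apply hs2 i j
    refine ⟨hne, ?_⟩
    rw [ht] at hij
    simp only at hij
    rw [div_eq_div_iff (hD i) (hD j)] at hij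
    linear_combination -hij
  have heval : ∀ i, (lineRestrict r z (1, s)).eval (t i) = 0 := by
    intro i
    rw [lineRestrict_eval]
    refine hvan i (z.1 + 1 * t i, z.2 + s * t i) ?_
    have hexp : a i * (z.1 + 1 * t i) + b i * (z.2 + s * t i) + c i
        = (a i * z.1 + b i * z.2 + c i) + (a i + b i * s) * t i := by ring
    rw [hexp, ht]
    simp only
    field_simp [hD i]
    ring
  have hf0 : lineRestrict r z (1, s) = 0 := by
    apply Polynomial.eq_zero_of_natDegree_lt_card_of_eval_eq_zero _ tinj heval
    rw [Fintype.card_fin]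
    exact lt_of_le_of_lt ((lineRestrict_natDegree_le r z (1, s)).trans hr) (Nat.lt_succ_self k)
  have h := lineRestrict_eval r z (1, s) 0
  rw [hf0, Polynomial.eval_zero] at h
  have h2 : MvPolynomial.eval ![z.1 + 1 * 0, z.2 + s * 0] r
      = MvPolynomial.eval ![z.1, z.2] r := by norm_num
  rw [h2] at h
  exact h.symm

lemma segment_infinite (x y : ℝ × ℝ) (h : x ≠ y) : (segment ℝ x y).Infinite := by
  rw [segment_eq_image']
  apply Set.Infinite.image
  · have hyx : y - x ≠ 0 := sub_ne_zero.mpr (Ne.symm h)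
    have hinj : Function.Injective (fun θ : ℝ => x + θ • (y - x)) := by
      intro t1 t2 ht
      simp only [add_right_inj] at ht
      exact smul_left_injective ℝ hyx ht
    exact hinj.injOn
  · exact Set.Icc_infinite (by norm_num)

lemma segment_line (x y : ℝ × ℝ) (h : x ≠ y) :
    ((x.2 - y.2, y.1 - x.1) : ℝ × ℝ) ≠ (0, 0) ∧
    ∀ z ∈ segment ℝ x y,
      (x.2 - y.2) * z.1 + (y.1 - x.1) * z.2 + (x.1 * y.2 - y.1 * x.2) = 0 := by
  constructor
  · intro hc
    rw [Prod.mk.injEq] at hc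
    apply h
    apply Prod.ext
    · linarith [hc.2]
    · linarith [hc.1]
  · rintro z ⟨u, v, hu, hv, huv, rfl⟩
    have h1 : (u • x + v • y).1 = u * x.1 + v * y.1 := rfl
    have h2 : (u • x + v • y).2 = u * x.2 + v * y.2 := rfl
    rw [h1, h2]
    linear_combination (y.1 * x.2 - x.1 * y.2) * huv



/-- A line in the plane: the zero set of a nonzero affine function. -/
def IsLine (L : Set (ℝ × ℝ)) : Prop :=
  ∃ a b c : ℝ, (a, b) ≠ (0, 0) ∧ L = {x : ℝ × ℝ | a * x.1 + b * x.2 + c = 0}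

/-- Let `P` be a polygon (with vertices `V 0, …, V (n-1)` and boundary `B` the union of
its edges) whose boundary is covered by `S` lines, `S` minimal (`S = S(P)`), and let
`k < S`.  If two bivariate polynomials of degree at most `k` agree on `∂P`, they agree
everywhere; in particular the serendipity projector onto `P_k` is uniquely determined. -/
theorem stmt3 (n : ℕ) [NeZero n] (hn : 3 ≤ n) (V : Fin n → ℝ × ℝ)
    (hedge : ∀ i : Fin n, V i ≠ V (i + 1))
    (B : Set (ℝ × ℝ)) (hB : B = ⋃ i : Fin n, segment ℝ (V i) (V (i + 1)))
    (S k : ℕ)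
    (hcover : ∃ L : Fin S → Set (ℝ × ℝ), (∀ i, IsLine (L i)) ∧ B ⊆ ⋃ i, L i)
    (hmin : ∀ m : ℕ,
      (∃ L : Fin m → Set (ℝ × ℝ), (∀ i, IsLine (L i)) ∧ B ⊆ ⋃ i, L i) → S ≤ m)
    (hk : k < S)
    (p q : MvPolynomial (Fin 2) ℝ) (hp : p.totalDegree ≤ k) (hq : q.totalDegree ≤ k)
    (heq : ∀ x ∈ B, MvPolynomial.eval ![x.1, x.2] p = MvPolynomial.eval ![x.1, x.2] q) :
    p = q := by
  classical
  set r : MvPolynomial (Fin 2) ℝ := p - q with hr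
  have hrdeg : r.totalDegree ≤ k :=
    (MvPolynomial.totalDegree_sub p q).trans (max_le hp hq)
  have hrB : ∀ x ∈ B, MvPolynomial.eval ![x.1, x.2] r = 0 := by
    intro x hx
    rw [hr, map_sub, heq x hx, sub_self]
  -- line data for each edge
  set la : Fin n → ℝ := fun i => (V i).2 - (V (i + 1)).2 with hla
  set lb : Fin n → ℝ := fun i => (V (i + 1)).1 - (V i).1 with hlb
  set lc : Fin n → ℝ := fun i => (V i).1 * (V (i + 1)).2 - (V (i + 1)).1 * (V i).2 with hlc
  have hline := fun i => segment_line (V i) (V (i + 1)) (hedge i)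
  -- r vanishes on each full edge line
  have hvanL : ∀ i : Fin n, ∀ x : ℝ × ℝ, la i * x.1 + lb i * x.2 + lc i = 0 →
      MvPolynomial.eval ![x.1, x.2] r = 0 := by
    intro i
    apply vanish_line r (la i) (lb i) (lc i) (hline i).1
      (segment ℝ (V i) (V (i + 1))) (segment_infinite _ _ (hedge i)) (hline i).2
    intro x hx
    apply hrB
    rw [hB]
    exact Set.mem_iUnion.mpr ⟨i, hx⟩
  set Lset : Fin n → Set (ℝ × ℝ) :=
    fun i => {x : ℝ × ℝ | la i * x.1 + lb i * x.2 + lc i = 0} with hLset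
  set 𝒯 : Finset (Set (ℝ × ℝ)) := Finset.image Lset Finset.univ with h𝒯
  have hmem : ∀ L ∈ 𝒯, ∃ i : Fin n, Lset i = L := by
    intro L hL
    rw [h𝒯, Finset.mem_image] at hL
    obtain ⟨i, _, hi⟩ := hL
    exact ⟨i, hi⟩
  have hTcard : S ≤ 𝒯.card := by
    apply hmin
    have e : {x // x ∈ 𝒯} ≃ Fin 𝒯.card := Fintype.equivFinOfCardEq (Fintype.card_coe 𝒯)
    refine ⟨fun j => (e.symm j : Set (ℝ × ℝ)), ?_, ?_⟩
    · intro j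
      obtain ⟨i, hi⟩ := hmem _ (e.symm j).2
      exact ⟨la i, lb i, lc i, (hline i).1, hi.symm⟩
    · intro x hx
      rw [hB] at hx
      obtain ⟨i, hxi⟩ := Set.mem_iUnion.mp hx
      have hxL : x ∈ Lset i := (hline i).2 x hxi
      have hLi : Lset i ∈ 𝒯 := by
        rw [h𝒯, Finset.mem_image]; exact ⟨i, Finset.mem_univ i, rfl⟩
      refine Set.mem_iUnion.mpr ⟨e ⟨Lset i, hLi⟩, ?_⟩
      simp only [Equiv.symm_apply_apply]
      exact hxL
  have hk1 : k + 1 ≤ 𝒯.card := le_trans (Nat.succ_le_of_lt hk) hTcard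
  have e : {x // x ∈ 𝒯} ≃ Fin 𝒯.card := Fintype.equivFinOfCardEq (Fintype.card_coe 𝒯)
  set g : Fin (k + 1) → {x // x ∈ 𝒯} := fun j => e.symm (Fin.castLE hk1 j) with hg
  have hginj : Function.Injective g := by
    intro j1 j2 hj
    have := e.symm.injective hj
    exact Fin.castLE_injective hk1 this
  choose ed hed using fun j : Fin (k + 1) => hmem _ (g j).2
  -- apply the main vanishing lemma
  have hvan0 : ∀ z : ℝ × ℝ, MvPolynomial.eval ![z.1, z.2] r = 0 := by
    intro z
    refine vanish_everywhere hrdeg (fun j => la (ed j)) (fun j => lb (ed j))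
      (fun j => lc (ed j)) (fun j => (hline (ed j)).1) ?_ (fun j => hvanL (ed j)) z
    intro i j hij hLeq
    apply hginj.ne hij
    have h1 : (g i : Set (ℝ × ℝ)) = Lset (ed i) := (hed i).symm
    have h2 : (g j : Set (ℝ × ℝ)) = Lset (ed j) := (hed j).symm
    apply Subtype.ext
    rw [h1, h2]
    exact hLeq
  have : r = 0 := by
    apply MvPolynomial.funext
    intro x
    have hx : ![x 0, x 1] = x := by
      funext i; fin_cases i <;> rfl
    have := hvan0 (x 0, x 1)
    simpa [hx] using this
  have hpq : p - q = 0 := this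
  exact sub_eq_zero.mp hpq
end

section
/- Let a : H × H → ℝ be a symmetric positive semidefinite bilinear form on a real inner product space H, Π : H → H a linear projector with a(Πv, q) = a(v, q) for all q in the range of Π, and S a symmetric bilinear form satisfying c₁ a(w,w) ≤ S(w,w) ≤ c₂ a(w,w) for all w in the kernel of Π (with 0 < c₁ ≤ c₂). Then the form a_h(u,v) := a(Πu, Πv) + S(u−Πu, v−Πv) satisfies min(1,c₁)·a(v,v) ≤ a_h(v,v) ≤ max(1,c₂)·a(v,v) for all v ∈ H. -/
/-- The VEM stability bound: if `a` is a symmetric positive semidefinite bilinear form,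
`Pr` a linear projector with `a(Pr v, q) = a(v, q)` for all `q` in its range, and `S`
a symmetric bilinear form with `c₁ a(w,w) ≤ S(w,w) ≤ c₂ a(w,w)` on `ker Pr`, then
`a_h(v,v) := a(Pr v, Pr v) + S(v − Pr v, v − Pr v)` satisfies
`min(1,c₁) a(v,v) ≤ a_h(v,v) ≤ max(1,c₂) a(v,v)` for all `v`. -/
theorem stmt10 (H : Type*) [NormedAddCommGroup H] [InnerProductSpace ℝ H]
    (a S : H →ₗ[ℝ] H →ₗ[ℝ] ℝ)
    (hasym : ∀ u v, a u v = a v u) (hapsd : ∀ v, 0 ≤ a v v)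
    (Pr : H →ₗ[ℝ] H) (hidem : ∀ v, Pr (Pr v) = Pr v)
    (horth : ∀ v, ∀ q ∈ LinearMap.range Pr, a (Pr v) q = a v q)
    (hSsym : ∀ u v, S u v = S v u)
    (c₁ c₂ : ℝ) (hc₁ : 0 < c₁) (hc₁₂ : c₁ ≤ c₂)
    (hS : ∀ w ∈ LinearMap.ker Pr, c₁ * a w w ≤ S w w ∧ S w w ≤ c₂ * a w w) :
    ∀ v : H,
      min 1 c₁ * a v v ≤ a (Pr v) (Pr v) + S (v - Pr v) (v - Pr v) ∧
      a (Pr v) (Pr v) + S (v - Pr v) (v - Pr v) ≤ max 1 c₂ * a v v := by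
  intro v
  set w := v - Pr v with hw
  have hker : w ∈ LinearMap.ker Pr := by
    simp [hw, LinearMap.mem_ker, map_sub, hidem]
  have hPrange : Pr v ∈ LinearMap.range Pr := ⟨v, rfl⟩
  have hcross : a (Pr v) (Pr v) = a v (Pr v) := horth v (Pr v) hPrange
  have hww : a w w = a v v - a (Pr v) (Pr v) := by
    have h1 : a w w = a v v - a (Pr v) v - (a v (Pr v) - a (Pr v) (Pr v)) := by
      simp [hw, map_sub, LinearMap.sub_apply]
    rw [h1, hasym (Pr v) v, hcross]; ring
  have hP := hapsd (Pr v)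
  have hW := hapsd w
  obtain ⟨hS1, hS2⟩ := hS w hker
  have havv : a v v = a (Pr v) (Pr v) + a w w := by linarith [hww]
  constructor
  · rcases min_cases 1 c₁ with ⟨hm, _⟩ | ⟨hm, hle⟩ <;> rw [hm] <;> nlinarith
  · rcases max_cases 1 c₂ with ⟨hm, hle⟩ | ⟨hm, hle⟩ <;> rw [hm] <;> nlinarith
end
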